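/- For bounded linear operators T, P on a complex Hilbert space with P self-adjoint, w(T²P + PT²) ≤ 2·w(T²)·‖P‖. -/

import Mathlib

open Complex

variable {H : Type*} [NormedAddCommGroup H] [InnerProductSpace ℂ H] [CompleteSpace H]

/-- The numerical radius `w(T) = sup {|⟨Tx,x⟩| : ‖x‖ = 1}`. -/
noncomputable def numRadius (T : H →L[ℂ] H) : ℝ :=
  sSup {r : ℝ | ∃ x : H, ‖x‖ = 1 ∧ r = ‖(inner ℂ (T x) x : ℂ)‖}

/-- The Crawford number `m(T) = inf {|⟨Tx,x⟩| : ‖x‖ = 1}`. -/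
noncomputable def crawford (T : H →L[ℂ] H) : ℝ :=
  sInf {r : ℝ | ∃ x : H, ‖x‖ = 1 ∧ r = ‖(inner ℂ (T x) x : ℂ)‖}

/-- The real part `Re(T) = (T + T*)/2`. -/
noncomputable def reOp (T : H →L[ℂ] H) : H →L[ℂ] H := (2 : ℂ)⁻¹ • (T + star T)

/-- The imaginary part `Im(T) = (T - T*)/(2i)`. -/
noncomputable def imOp (T : H →L[ℂ] H) : H →L[ℂ] H := (2 * Complex.I)⁻¹ • (T - star T)

set_option linter.unusedSectionVars false

lemma numRadius_bdd (A : H →L[ℂ] H) :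
    BddAbove {r : ℝ | ∃ x : H, ‖x‖ = 1 ∧ r = ‖(inner ℂ (A x) x : ℂ)‖} := by
  refine ⟨‖A‖, ?_⟩
  rintro r ⟨x, hx, rfl⟩
  calc ‖(inner ℂ (A x) x : ℂ)‖ ≤ ‖A x‖ * ‖x‖ := norm_inner_le_norm _ _
    _ ≤ ‖A‖ * ‖x‖ * ‖x‖ := by
        have := A.le_opNorm x
        nlinarith [norm_nonneg x]
    _ = ‖A‖ := by rw [hx]; ring

lemma numRadius_nonneg (A : H →L[ℂ] H) : 0 ≤ numRadius A := by
  by_cases h : ∃ x : H, ‖x‖ = 1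
  · obtain ⟨x, hx⟩ := h
    have : (0:ℝ) ≤ ‖(inner ℂ (A x) x : ℂ)‖ := norm_nonneg _
    exact le_trans this (le_csSup (numRadius_bdd A) ⟨x, hx, rfl⟩)
  · have : {r : ℝ | ∃ x : H, ‖x‖ = 1 ∧ r = ‖(inner ℂ (A x) x : ℂ)‖} = ∅ := by
      ext r; simp only [Set.mem_setOf_eq, Set.mem_empty_iff_false, iff_false]
      rintro ⟨x, hx, -⟩; exact h ⟨x, hx⟩
    rw [numRadius, this, Real.sSup_empty]

lemma inner_le_numRadius (A : H →L[ℂ] H) (v : H) :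
    ‖(inner ℂ (A v) v : ℂ)‖ ≤ numRadius A * ‖v‖ ^ 2 := by
  rcases eq_or_ne v 0 with rfl | hv
  · simp
  · have hnv : (0:ℝ) < ‖v‖ := norm_pos_iff.mpr hv
    set u := (‖v‖⁻¹ : ℂ) • v with hu
    have hun : ‖u‖ = 1 := by
      rw [hu, norm_smul]
      simp [norm_inv, hnv.ne']
    have key : ‖(inner ℂ (A u) u : ℂ)‖ ≤ numRadius A :=
      le_csSup (numRadius_bdd A) ⟨u, hun, rfl⟩
    have hcalc : (inner ℂ (A u) u : ℂ) = (‖v‖⁻¹:ℂ)^2 * inner ℂ (A v) v := by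
      rw [hu, map_smul, inner_smul_left, inner_smul_right]
      rw [map_inv₀, Complex.conj_ofReal]
      ring
    have hnorm : ‖(inner ℂ (A u) u : ℂ)‖ = ‖v‖⁻¹^2 * ‖(inner ℂ (A v) v : ℂ)‖ := by
      rw [hcalc, norm_mul, norm_pow]
      norm_num [Complex.norm_real]
    rw [hnorm] at key
    have h2 : ‖v‖⁻¹^2 > 0 := by positivity
    calc ‖(inner ℂ (A v) v : ℂ)‖ = (‖v‖⁻¹^2 * ‖(inner ℂ (A v) v : ℂ)‖) * ‖v‖^2 := by
          field_simp
      _ ≤ numRadius A * ‖v‖^2 := by nlinarith [sq_nonneg ‖v‖]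

lemma polar_bound (A : H →L[ℂ] H) (x y : H) :
    ‖(inner ℂ (A x) y : ℂ) + inner ℂ (A y) x‖ ≤ numRadius A * (‖x‖^2 + ‖y‖^2) := by
  have hid : (inner ℂ (A (x+y)) (x+y) : ℂ) - inner ℂ (A (x-y)) (x-y)
      = 2 * ((inner ℂ (A x) y : ℂ) + inner ℂ (A y) x) := by
    simp only [map_add, map_sub, inner_add_left, inner_add_right, inner_sub_left,
      inner_sub_right]
    ring
  have h1 := inner_le_numRadius A (x+y)
  have h2 := inner_le_numRadius A (x-y)
  have hpar : ‖x+y‖^2 + ‖x-y‖^2 = 2*(‖x‖^2 + ‖y‖^2) := by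
    have := parallelogram_law_with_norm ℂ x y
    nlinarith [this]
  have : ‖(2:ℂ) * ((inner ℂ (A x) y : ℂ) + inner ℂ (A y) x)‖
      ≤ numRadius A * (‖x+y‖^2) + numRadius A * (‖x-y‖^2) := by
    rw [← hid]
    exact le_trans (norm_sub_le _ _) (add_le_add h1 h2)
  rw [norm_mul] at this
  simp only [Complex.norm_ofNat] at this
  have h3 : numRadius A * ‖x+y‖^2 + numRadius A * ‖x-y‖^2
      = 2 * (numRadius A * (‖x‖^2 + ‖y‖^2)) := by rw [← mul_add, hpar]; ring
  linarith

lemma polar_bound' (A : H →L[ℂ] H) (x y : H) :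
    ‖(inner ℂ (A x) y : ℂ) + inner ℂ (A y) x‖ ≤ 2 * numRadius A * (‖x‖ * ‖y‖) := by
  rcases eq_or_ne x 0 with rfl | hx
  · simp [numRadius_nonneg A]
  rcases eq_or_ne y 0 with rfl | hy
  · simp [numRadius_nonneg A]
  have hnx : (0:ℝ) < ‖x‖ := norm_pos_iff.mpr hx
  have hny : (0:ℝ) < ‖y‖ := norm_pos_iff.mpr hy
  set t : ℝ := Real.sqrt (‖y‖ / ‖x‖) with ht
  have htpos : 0 < t := Real.sqrt_pos.mpr (by positivity)
  have ht2 : t^2 = ‖y‖ / ‖x‖ := Real.sq_sqrt (by positivity)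
  have key := polar_bound A ((t:ℂ) • x) ((t:ℂ)⁻¹ • y)
  have heq : (inner ℂ (A ((t:ℂ) • x)) ((t:ℂ)⁻¹ • y) : ℂ)
      + inner ℂ (A ((t:ℂ)⁻¹ • y)) ((t:ℂ) • x)
      = (inner ℂ (A x) y : ℂ) + inner ℂ (A y) x := by
    have htne : (t:ℂ) ≠ 0 := by exact_mod_cast htpos.ne'
    simp only [map_smul, inner_smul_left, inner_smul_right, map_inv₀,
      Complex.conj_ofReal]
    field_simp
  rw [heq] at key
  have hn1 : ‖(t:ℂ) • x‖^2 = t^2 * ‖x‖^2 := by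
    rw [norm_smul]; simp [abs_of_pos htpos]; ring
  have hn2 : ‖(t:ℂ)⁻¹ • y‖^2 = t⁻¹^2 * ‖y‖^2 := by
    rw [norm_smul]; simp [abs_of_pos htpos]; ring
  rw [hn1, hn2] at key
  have ht2' : t⁻¹^2 = ‖x‖ / ‖y‖ := by
    rw [inv_pow, ht2, inv_div]
  have hval : t^2 * ‖x‖^2 + t⁻¹^2 * ‖y‖^2 = 2 * (‖x‖ * ‖y‖) := by
    rw [ht2, ht2']
    field_simp
    ring
  rw [hval] at key
  linarith [key]

theorem stmt18 (T P : H →L[ℂ] H) (hP : star P = P) :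
    numRadius (T ^ 2 * P + P * T ^ 2) ≤ 2 * numRadius (T ^ 2) * ‖P‖ := by
  set A := T ^ 2 with hA
  apply Real.sSup_le
  · rintro r ⟨x, hx, rfl⟩
    have hsplit : (inner ℂ ((A * P + P * A) x) x : ℂ)
        = inner ℂ (A (P x)) x + inner ℂ (A x) (P x) := by
      have : ((A * P + P * A) x) = A (P x) + P (A x) := by
        simp [ContinuousLinearMap.add_apply, ContinuousLinearMap.mul_apply]
      rw [this, inner_add_left]
      congr 1
      have hPadj : P (A x) = (ContinuousLinearMap.adjoint P) (A x) := by
        rw [← ContinuousLinearMap.star_eq_adjoint, hP]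
      rw [hPadj]
      exact ContinuousLinearMap.adjoint_inner_left P x (A x)
    rw [hsplit]
    calc ‖(inner ℂ (A (P x)) x : ℂ) + inner ℂ (A x) (P x)‖
        ≤ 2 * numRadius A * (‖P x‖ * ‖x‖) := polar_bound' A (P x) x
      _ ≤ 2 * numRadius A * ‖P‖ := by
          have hPx : ‖P x‖ ≤ ‖P‖ * ‖x‖ := P.le_opNorm x
          have h1 : ‖P x‖ * ‖x‖ ≤ ‖P‖ := by rw [hx]; simpa [hx] using hPx
          exact mul_le_mul_of_nonneg_left h1 (by linarith [numRadius_nonneg A])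
  · have := numRadius_nonneg (T^2)
    positivity
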